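/- Assume K := 1 − max_{i,j} bᵢ⁻¹aᵢⱼ > 0. Then for all c ∈ D, the van der Waals pressure p = c̄/(1 − ∑ⱼ bⱼcⱼ) − ∑ᵢⱼ aᵢⱼcᵢcⱼ satisfies p ≥ K c̄; in particular p > 0. -/
import Mathlib


/-- under `K := 1 - max_{i,j} bᵢ⁻¹ aᵢⱼ > 0`, the van der Waals
pressure satisfies `p ≥ K c̄ > 0` on the domain `D`. -/
theorem stmt12 (n : ℕ) (hn : 0 < n) (b : Fin n → ℝ) (a : Fin n → Fin n → ℝ)
    (hb : ∀ i, 0 < b i) (hapos : ∀ i j, 0 < a i j)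
    (K : ℝ) (hK : K = 1 - ⨆ i, ⨆ j, a i j / b i) (hKpos : 0 < K)
    (c : Fin n → ℝ) (hc : ∀ i, 0 < c i) (hbc : ∑ j, b j * c j < 1)
    (p : ℝ)
    (hp : p = (∑ i, c i) / (1 - ∑ j, b j * c j) - ∑ i, ∑ j, a i j * c i * c j) :
    p ≥ K * ∑ i, c i ∧ 0 < p := by
  haveI : Nonempty (Fin n) := ⟨⟨0, hn⟩⟩
  set M : ℝ := ⨆ i, ⨆ j, a i j / b i with hM
  have hle : ∀ i j, a i j / b i ≤ M := by
    intro i j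
    have h1 : a i j / b i ≤ ⨆ j, a i j / b i :=
      le_ciSup (f := fun j => a i j / b i) (Set.Finite.bddAbove (Set.finite_range _)) j
    exact h1.trans (le_ciSup (f := fun i => ⨆ j, a i j / b i)
      (Set.Finite.bddAbove (Set.finite_range _)) i)
  have hMpos : 0 < M := lt_of_lt_of_le (div_pos (hapos _ _) (hb _)) (hle ⟨0, hn⟩ ⟨0, hn⟩)
  have haM : ∀ i j, a i j ≤ M * b i := fun i j =>
    (div_le_iff₀ (hb i)).mp (hle i j)
  set S : ℝ := ∑ j, b j * c j with hS
  set C : ℝ := ∑ i, c i with hC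
  have hCpos : 0 < C := Finset.sum_pos (fun i _ => hc i) Finset.univ_nonempty
  have hSpos : 0 < S := Finset.sum_pos (fun i _ => mul_pos (hb i) (hc i)) Finset.univ_nonempty
  have hQ : ∑ i, ∑ j, a i j * c i * c j ≤ M * S * C := by
    have : ∑ i, ∑ j, a i j * c i * c j ≤ ∑ i, ∑ j, (M * b i) * c i * c j := by
      refine Finset.sum_le_sum fun i _ => Finset.sum_le_sum fun j _ => ?_
      exact mul_le_mul_of_nonneg_right
        (mul_le_mul_of_nonneg_right (haM i j) (hc i).le) (hc j).le
    refine this.trans_eq ?_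
    have : ∀ i : Fin n, ∑ j, (M * b i) * c i * c j = (M * (b i * c i)) * C := by
      intro i
      rw [← Finset.mul_sum]; ring
    rw [Finset.sum_congr rfl (fun i _ => this i), ← Finset.sum_mul, ← Finset.mul_sum]
    try ring
  have hdiv : C ≤ C / (1 - S) := by
    rw [le_div_iff₀ (by linarith)]
    nlinarith
  have hpge : p ≥ K * C := by
    rw [hp, hK]
    have : M * S * C ≤ M * C := by
      nlinarith [mul_le_mul_of_nonneg_right (mul_le_mul_of_nonneg_left hbc.le hMpos.le) hCpos.le]
    nlinarith
  exact ⟨hpge, lt_of_lt_of_le (by positivity) hpge⟩
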